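/- arXiv:math/0212348 — 4 statements merged into one kernel-verified Lean document; each statement's English description precedes it below -/
import Mathlib

section
/- For nonnegative integers a_{i-2},...,a_{i+5} satisfying the (k,3)-admissibility condition a_j+a_{j+1}+a_{j+2} ≤ k, the maximal-weight-l conditions a_j+a_{j+1} ≤ l and a_{j-1}+2a_j+2a_{j+1}+a_{j+2} ≤ k+l, and the equality a_{i+1}+2a_{i+2}+2a_{i+3}+a_{i+4} = k+l: if a_i+a_{i+1}=l then a_{i+3}+a_{i+4}=l. -/
/-- Lemma BASIC: for a (k,3)-admissible configuration of maximal weight ≤ l,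
if a_{i+1}+2a_{i+2}+2a_{i+3}+a_{i+4} = k+l and a_i+a_{i+1} = l then a_{i+3}+a_{i+4} = l. -/
theorem stmt_0 (k l : ℕ) (hl : 1 ≤ l) (hlk : l ≤ k) (a : ℤ → ℕ)
    (hadm : ∀ j : ℤ, a j + a (j+1) + a (j+2) ≤ k)
    (hS : ∀ j : ℤ, a j + a (j+1) ≤ l)
    (hL : ∀ j : ℤ, a (j-1) + 2 * a j + 2 * a (j+1) + a (j+2) ≤ k + l)
    (i : ℤ)
    (heq : a (i+1) + 2 * a (i+2) + 2 * a (i+3) + a (i+4) = k + l)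
    (hSi : a i + a (i+1) = l) :
    a (i+3) + a (i+4) = l := by
  have h1 := hL (i+1)
  have h2 := hS (i+3)
  have e1 : i + 1 - 1 = i := by ring
  have e2 : i + 1 + 1 = i + 2 := by ring
  have e3 : i + 1 + 2 = i + 3 := by ring
  have e4 : i + 3 + 1 = i + 4 := by ring
  rw [e1, e2, e3] at h1
  rw [e4] at h2
  omega
end

section
/- Let (a_i) be a (k,3)-admissible configuration of maximal weight ≤ l, and suppose i is an index such that a_i + a_{i+1} = l or a_{i-1}+2a_i+2a_{i+1}+a_{i+2} = k+l, and for all j > i neither a_j+a_{j+1} = l nor a_{j-1}+2a_j+2a_{j+1}+a_{j+2} = k+l holds. Then a_i > 0, and the configuration b obtained by setting b_i = a_i - 1, b_{i+1} = a_{i+1}+1 and b_j = a_j otherwise is again (k,3)-admissible of maximal weight ≤ l. -/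
/-- The right move is well defined: if i is the highest position of a weight-l particle
in a finite (k,3)-admissible configuration of maximal weight ≤ l, then a_i > 0 and the
configuration obtained by replacing (a_i, a_{i+1}) by (a_i - 1, a_{i+1} + 1) is again
(k,3)-admissible of maximal weight ≤ l. -/
theorem stmt_2 (k l : ℕ) (hl : 1 ≤ l) (hlk : l ≤ k) (a : ℤ → ℕ)
    (hfin : {j : ℤ | a j ≠ 0}.Finite)
    (hadm : ∀ j : ℤ, a j + a (j+1) + a (j+2) ≤ k)
    (hS : ∀ j : ℤ, a j + a (j+1) ≤ l)
    (hL : ∀ j : ℤ, a (j-1) + 2 * a j + 2 * a (j+1) + a (j+2) ≤ k + l)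
    (i : ℤ)
    (hi : a i + a (i+1) = l ∨ a (i-1) + 2 * a i + 2 * a (i+1) + a (i+2) = k + l)
    (hmax : ∀ j : ℤ, i < j →
      ¬(a j + a (j+1) = l ∨ a (j-1) + 2 * a j + 2 * a (j+1) + a (j+2) = k + l)) :
    0 < a i ∧
    (∀ j : ℤ,
      let b : ℤ → ℕ :=
        Function.update (Function.update a i (a i - 1)) (i+1) (a (i+1) + 1)
      b j + b (j+1) + b (j+2) ≤ k ∧ b j + b (j+1) ≤ l ∧
        b (j-1) + 2 * b j + 2 * b (j+1) + b (j+2) ≤ k + l) := by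
  -- normalized instances of the hypotheses around i
  have hA1 : a (i-2) + a (i-1) + a i ≤ k := by
    have h := hadm (i-2); rw [show i-2+1 = i-1 by ring, show i-2+2 = i by ring] at h; exact h
  have hA2 : a (i-1) + a i + a (i+1) ≤ k := by
    have h := hadm (i-1); rw [show i-1+1 = i by ring, show i-1+2 = i+1 by ring] at h; exact h
  have hA3 : a i + a (i+1) + a (i+2) ≤ k := hadm i
  have hA4 : a (i+1) + a (i+2) + a (i+3) ≤ k := by
    have h := hadm (i+1); rw [show i+1+1 = i+2 by ring, show i+1+2 = i+3 by ring] at h; exact h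
  have hA5 : a (i+2) + a (i+3) + a (i+4) ≤ k := by
    have h := hadm (i+2); rw [show i+2+1 = i+3 by ring, show i+2+2 = i+4 by ring] at h; exact h
  have hSm2 : a (i-2) + a (i-1) ≤ l := by
    have h := hS (i-2); rw [show i-2+1 = i-1 by ring] at h; exact h
  have hS0 : a (i-1) + a i ≤ l := by
    have h := hS (i-1); rw [show i-1+1 = i by ring] at h; exact h
  have hS1 : a i + a (i+1) ≤ l := hS i
  have hS2' : a (i+1) + a (i+2) ≤ l := by
    have h := hS (i+1); rw [show i+1+1 = i+2 by ring] at h; exact h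
  have hS3 : a (i+2) + a (i+3) ≤ l := by
    have h := hS (i+2); rw [show i+2+1 = i+3 by ring] at h; exact h
  have hL1 : a (i-3) + 2 * a (i-2) + 2 * a (i-1) + a i ≤ k + l := by
    have h := hL (i-2)
    rw [show i-2-1 = i-3 by ring, show i-2+1 = i-1 by ring, show i-2+2 = i by ring] at h; exact h
  have hL2 : a (i-2) + 2 * a (i-1) + 2 * a i + a (i+1) ≤ k + l := by
    have h := hL (i-1)
    rw [show i-1-1 = i-2 by ring, show i-1+1 = i by ring, show i-1+2 = i+1 by ring] at h; exact h
  have hL3 : a (i-1) + 2 * a i + 2 * a (i+1) + a (i+2) ≤ k + l := hL i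
  have hL4' : a i + 2 * a (i+1) + 2 * a (i+2) + a (i+3) ≤ k + l := by
    have h := hL (i+1)
    rw [show i+1-1 = i by ring, show i+1+1 = i+2 by ring, show i+1+2 = i+3 by ring] at h; exact h
  have hL5' : a (i+1) + 2 * a (i+2) + 2 * a (i+3) + a (i+4) ≤ k + l := by
    have h := hL (i+2)
    rw [show i+2-1 = i+1 by ring, show i+2+1 = i+3 by ring, show i+2+2 = i+4 by ring] at h; exact h
  -- strict facts from maximality at i+1 and i+2
  have hm1 := hmax (i+1) (by omega)
  rw [show i+1+1 = i+2 by ring, show i+1-1 = i by ring, show i+1+2 = i+3 by ring] at hm1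
  have hm2 := hmax (i+2) (by omega)
  rw [show i+2+1 = i+3 by ring, show i+2-1 = i+1 by ring, show i+2+2 = i+4 by ring] at hm2
  push_neg at hm1 hm2
  obtain ⟨hm1a, hm1b⟩ := hm1
  obtain ⟨hm2a, hm2b⟩ := hm2
  have hS2 : a (i+1) + a (i+2) < l := lt_of_le_of_ne hS2' hm1a
  have hL4 : a i + 2 * a (i+1) + 2 * a (i+2) + a (i+3) < k + l := lt_of_le_of_ne hL4' hm1b
  have hL5 : a (i+1) + 2 * a (i+2) + 2 * a (i+3) + a (i+4) < k + l := lt_of_le_of_ne hL5' hm2b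
  -- positivity
  have hpos : 0 < a i := by
    by_contra h0
    push_neg at h0
    omega
  -- the key derived strict inequality
  have hK : a (i+1) + a (i+2) + a (i+3) < k := by
    by_contra h0
    push_neg at h0
    omega
  refine ⟨hpos, ?_⟩
  intro j
  intro b
  have hbi : b i = a i - 1 := by
    show Function.update _ (i+1) _ i = _
    rw [Function.update_of_ne (by omega), Function.update_self]
  have hbi1 : b (i+1) = a (i+1) + 1 := by
    show Function.update _ (i+1) _ (i+1) = _
    rw [Function.update_self]
  have hbo : ∀ m : ℤ, m ≠ i → m ≠ i + 1 → b m = a m := by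
    intro m h1 h2
    show Function.update _ (i+1) _ m = _
    rw [Function.update_of_ne h2, Function.update_of_ne h1]
  by_cases h1 : j = i - 2
  · rw [h1]
    rw [show i-2+1 = i-1 by ring, show i-2+2 = i by ring, show i-2-1 = i-3 by ring,
      hbi, hbo (i-2) (by omega) (by omega), hbo (i-1) (by omega) (by omega),
      hbo (i-3) (by omega) (by omega)]
    omega
  by_cases h2 : j = i - 1
  · rw [h2]
    rw [show i-1+1 = i by ring, show i-1+2 = i+1 by ring, show i-1-1 = i-2 by ring,
      hbi, hbi1, hbo (i-1) (by omega) (by omega), hbo (i-2) (by omega) (by omega)]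
    omega
  by_cases h3 : j = i
  · rw [h3]
    rw [hbi, hbi1, hbo (i+2) (by omega) (by omega), hbo (i-1) (by omega) (by omega)]
    omega
  by_cases h4 : j = i + 1
  · rw [h4]
    rw [show i+1+1 = i+2 by ring, show i+1+2 = i+3 by ring, show i+1-1 = i by ring,
      hbi, hbi1, hbo (i+2) (by omega) (by omega), hbo (i+3) (by omega) (by omega)]
    omega
  by_cases h5 : j = i + 2
  · rw [h5]
    rw [show i+2+1 = i+3 by ring, show i+2+2 = i+4 by ring, show i+2-1 = i+1 by ring,
      hbi1, hbo (i+2) (by omega) (by omega), hbo (i+3) (by omega) (by omega),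
      hbo (i+4) (by omega) (by omega)]
    omega
  · rw [hbo j (by omega) (by omega), hbo (j+1) (by omega) (by omega),
      hbo (j+2) (by omega) (by omega), hbo (j-1) (by omega) (by omega)]
    exact ⟨hadm j, hS j, hL j⟩
end

section
/- Let a be a finite (k,3)-admissible configuration of maximal weight ≤ l such that a_i+a_{i+1} = l, a_{i'}+a_{i'+1} = l for indices i ≥ i'+2, and a_j = 0 for j ∉ {i, i+1, i', i'+1}. Set d = i·a_i + (i+1)·a_{i+1} and d' = i'·a_{i'} + (i'+1)·a_{i'+1}. Then d - d' ≥ 2l + max(2l-k, 0). -/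
/-- Two free weight-l particles in a (k,3)-admissible configuration of maximal weight ≤ l
have energies differing by at least A_{l,l} = 2l + max(2l-k,0). -/
theorem stmt_4 (k l : ℕ) (hl : 1 ≤ l) (hlk : l ≤ k) (a : ℤ → ℕ)
    (hadm : ∀ j : ℤ, a j + a (j+1) + a (j+2) ≤ k)
    (hS : ∀ j : ℤ, a j + a (j+1) ≤ l)
    (hL : ∀ j : ℤ, a (j-1) + 2 * a j + 2 * a (j+1) + a (j+2) ≤ k + l)
    (i i' : ℤ) (hii' : i' + 2 ≤ i)
    (h1 : a i + a (i+1) = l) (h2 : a i' + a (i'+1) = l)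
    (h0 : ∀ j : ℤ, j ≠ i → j ≠ i+1 → j ≠ i' → j ≠ i'+1 → a j = 0) :
    (i * a i + (i+1) * a (i+1) : ℤ) - (i' * a i' + (i'+1) * a (i'+1)) ≥
      2 * l + max (2 * (l : ℤ) - k) 0 := by
  have key : (i * a i + (i+1) * a (i+1) : ℤ) - (i' * a i' + (i'+1) * a (i'+1))
      = (i - i') * l + ((a (i+1) : ℤ) - a (i'+1)) := by
    have e1 : (a i : ℤ) = (l : ℤ) - a (i+1) := by omega
    have e2 : (a i' : ℤ) = (l : ℤ) - a (i'+1) := by omega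
    rw [e1, e2]; ring
  rw [key]
  have hVle : (a (i'+1) : ℤ) ≤ l := by have := hS i'; omega
  have hYnn : (0:ℤ) ≤ a (i+1) := Int.ofNat_nonneg _
  rcases (by omega : i = i' + 2 ∨ i = i' + 3 ∨ i' + 4 ≤ i) with rfl | rfl | h4
  · -- gap 2
    have hs : a (i'+1) + a (i'+2) ≤ l := by
      have := hS (i'+1); rwa [show i'+1+1 = i'+2 by ring] at this
    have hl1 : a i' + 2 * a (i'+1) + 2 * a (i'+2) + a (i'+3) ≤ k + l := by
      have := hL (i'+1)
      rwa [show i'+1-1 = i' by ring, show i'+1+1 = i'+2 by ring,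
        show i'+1+2 = i'+3 by ring] at this
    have h1' : a (i'+2) + a (i'+3) = l := by
      have := h1; rwa [show i'+2+1 = i'+3 by ring] at this
    rw [show i'+2+1 = i'+3 by ring]
    have hm : max (2*(l:ℤ)-k) 0 ≤ (a (i'+3) : ℤ) - a (i'+1) := by
      apply max_le <;> omega
    have hr : (i'+2-i')*(l:ℤ) = 2*l := by ring
    linarith
  · -- gap 3
    have h01 : a (i'+2) = 0 := by apply h0 <;> omega
    have hl2 : a (i'+1) + 2 * a (i'+2) + 2 * a (i'+3) + a (i'+4) ≤ k + l := by
      have := hL (i'+2)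
      rwa [show i'+2-1 = i'+1 by ring, show i'+2+1 = i'+3 by ring,
        show i'+2+2 = i'+4 by ring] at this
    have h1' : a (i'+3) + a (i'+4) = l := by
      have := h1; rwa [show i'+3+1 = i'+4 by ring] at this
    rw [show i'+3+1 = i'+4 by ring]
    have hm : max (2*(l:ℤ)-k) 0 ≤ (l:ℤ) + ((a (i'+4) : ℤ) - a (i'+1)) := by
      apply max_le <;> omega
    have hr : (i'+3-i')*(l:ℤ) = 3*l := by ring
    linarith
  · -- gap ≥ 4
    have hmul : (4:ℤ)*l ≤ (i-i')*l :=
      mul_le_mul_of_nonneg_right (by omega) (by positivity)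
    have hm : max (2*(l:ℤ)-k) 0 ≤ (l:ℤ) := max_le (by omega) (by positivity)
    linarith
end

section
/- Let 1 ≤ l ≤ k and let d_1 > d_2 > ... > d_m be integers with d_i - d_{i+1} ≥ 2l + max(2l-k,0) for 1 ≤ i ≤ m-1. For each i choose integers j_i and c_i with 1 ≤ c_i ≤ l and j_i·c_i + (j_i+1)(l-c_i) = d_i. Then the 2m integers j_1, j_1+1, j_2, j_2+1, ..., j_m, j_m+1 are pairwise distinct, and the configuration a defined by a_{j_i} = c_i, a_{j_i+1} = l - c_i, and a_j = 0 otherwise is (k,3)-admissible of maximal weight ≤ l. -/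
/-- Free weight-l particles at energies d_1 > ... > d_m with gaps at least
A_{l,l} = 2l + max(2l-k,0) occupy pairwise distinct columns and form a
(k,3)-admissible configuration of maximal weight ≤ l. -/
theorem stmt_5 (k l : ℕ) (hl : 1 ≤ l) (hlk : l ≤ k) (m : ℕ)
    (d : Fin m → ℤ)
    (hgap : ∀ i j : Fin m, (i : ℕ) + 1 = (j : ℕ) →
      d i - d j ≥ 2 * l + max (2 * (l : ℤ) - k) 0)
    (j : Fin m → ℤ) (c : Fin m → ℕ)
    (hc : ∀ i, 1 ≤ c i ∧ c i ≤ l)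
    (hd : ∀ i, j i * c i + (j i + 1) * ((l : ℤ) - c i) = d i)
    (a : ℤ → ℕ)
    (ha1 : ∀ i, a (j i) = c i ∧ a (j i + 1) = l - c i)
    (ha0 : ∀ x : ℤ, (∀ i, x ≠ j i ∧ x ≠ j i + 1) → a x = 0) :
    (∀ i i' : Fin m, i ≠ i' → j i ≠ j i' ∧ j i ≠ j i' + 1 ∧ j i + 1 ≠ j i') ∧
    (∀ x : ℤ, a x + a (x+1) + a (x+2) ≤ k ∧ a x + a (x+1) ≤ l ∧
      a (x-1) + 2 * a x + 2 * a (x+1) + a (x+2) ≤ k + l) := by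
  have hM0 : (0:ℤ) ≤ max (2 * (l:ℤ) - k) 0 := le_max_right _ _
  have hMk : 2 * (l:ℤ) - k ≤ max (2 * (l:ℤ) - k) 0 := le_max_left _ _
  have hval1 : ∀ i, a (j i) = c i := fun i => (ha1 i).1
  have hval2 : ∀ i, a (j i + 1) = l - c i := fun i => (ha1 i).2
  have hdj : ∀ i, d i = j i * l + ((l:ℤ) - c i) := by
    intro i; rw [← hd i]; ring
  -- monotonicity along chains
  have hmono : ∀ n : ℕ, ∀ p q : Fin m, (p:ℕ) + n = (q:ℕ) → d q ≤ d p := by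
    intro n
    induction n with
    | zero =>
      intro p q h
      have : p = q := Fin.val_injective (by omega)
      rw [this]
    | succ n ih =>
      intro p q h
      have hqlt := q.isLt
      have hr : (p:ℕ) + n < m := by omega
      have h1 := hgap ⟨(p:ℕ)+n, hr⟩ q (by show (p:ℕ)+n+1 = (q:ℕ); omega)
      have h2 := ih p ⟨(p:ℕ)+n, hr⟩ rfl
      linarith
  have hgap' : ∀ p q : Fin m, (p:ℕ) < (q:ℕ) →
      d p - d q ≥ 2*(l:ℤ) ∧ d p - d q ≥ 4*(l:ℤ) - k := by
    intro p q h
    have hqlt := q.isLt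
    have hr : (p:ℕ) + 1 < m := by omega
    have h1 := hgap p ⟨(p:ℕ)+1, hr⟩ rfl
    have h2 := hmono ((q:ℕ) - ((p:ℕ)+1)) ⟨(p:ℕ)+1, hr⟩ q
      (by show (p:ℕ)+1 + ((q:ℕ) - ((p:ℕ)+1)) = (q:ℕ); omega)
    exact ⟨by linarith, by linarith⟩
  -- separation of columns
  have hsep : ∀ p q : Fin m, (p:ℕ) < (q:ℕ) → j q + 2 ≤ j p := by
    intro p q h
    have hg := (hgap' p q h).1
    have key : d p - d q = (j p - j q) * l + ((c q:ℤ) - c p) := by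
      rw [hdj p, hdj q]; ring
    have hcp : (1:ℤ) ≤ (c p : ℤ) := by exact_mod_cast (hc p).1
    have hcq : ((c q : ℤ)) ≤ l := by exact_mod_cast (hc q).2
    have hcl : (1:ℤ) ≤ (l:ℤ) := by exact_mod_cast hl
    by_contra hcon
    push_neg at hcon
    have hb : (j p - j q) * l ≤ 1 * l :=
      mul_le_mul_of_nonneg_right (by linarith) (by linarith)
    linarith
  have hD1 : ∀ p q : Fin m, j p ≠ j q + 1 := by
    intro p q h
    by_cases e : (p:ℕ) = (q:ℕ)
    · have : p = q := Fin.val_injective e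
      subst this; omega
    · rcases Nat.lt_or_ge (p:ℕ) (q:ℕ) with h2|h2
      · have := hsep p q h2; omega
      · have h3 : (q:ℕ) < (p:ℕ) := by omega
        have := hsep q p h3; omega
  have hR2 : ∀ p q : Fin m, j p = j q + 2 →
      (c p:ℤ) ≤ c q ∧ (c p:ℤ) + 2*l ≤ c q + k := by
    intro p q he
    have hpq : (p:ℕ) < (q:ℕ) := by
      rcases lt_trichotomy ((p:ℕ)) ((q:ℕ)) with h|h|h
      · exact h
      · have : p = q := Fin.val_injective h
        subst this; omega
      · have := hsep q p h; omega
    obtain ⟨g1, g2⟩ := hgap' p q hpq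
    have key : d p - d q = (j p - j q) * l + ((c q:ℤ) - c p) := by
      rw [hdj p, hdj q]; ring
    rw [he] at key
    have key2 : d p - d q = 2*(l:ℤ) + ((c q:ℤ) - c p) := by rw [key]; ring
    exact ⟨by linarith, by linarith⟩
  have hR3 : ∀ p q : Fin m, j p = j q + 3 →
      (c p:ℤ) ≤ c q + l ∧ (c p:ℤ) + l ≤ c q + k := by
    intro p q he
    have hpq : (p:ℕ) < (q:ℕ) := by
      rcases lt_trichotomy ((p:ℕ)) ((q:ℕ)) with h|h|h
      · exact h
      · have : p = q := Fin.val_injective h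
        subst this; omega
      · have := hsep q p h; omega
    obtain ⟨g1, g2⟩ := hgap' p q hpq
    have key : d p - d q = (j p - j q) * l + ((c q:ℤ) - c p) := by
      rw [hdj p, hdj q]; ring
    rw [he] at key
    have key2 : d p - d q = 3*(l:ℤ) + ((c q:ℤ) - c p) := by rw [key]; ring
    exact ⟨by linarith, by linarith⟩
  -- structure of a
  have hstruct : ∀ y : ℤ, a y = 0 ∨ (∃ i, y = j i ∧ a y = c i) ∨
      (∃ i, y = j i + 1 ∧ a y = l - c i) := by
    intro y
    by_cases h : ∀ i, y ≠ j i ∧ y ≠ j i + 1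
    · exact Or.inl (ha0 y h)
    · push_neg at h
      obtain ⟨i, hi⟩ := h
      by_cases h2 : y = j i
      · exact Or.inr (Or.inl ⟨i, h2, by rw [h2]; exact hval1 i⟩)
      · exact Or.inr (Or.inr ⟨i, hi h2, by rw [hi h2]; exact hval2 i⟩)
  have hal : ∀ y : ℤ, a y ≤ l := by
    intro y
    rcases hstruct y with h | ⟨i, _, h⟩ | ⟨i, _, h⟩
    · omega
    · have := hc i; omega
    · have := hc i; omega
  constructor
  · intro i i' hne
    rcases lt_trichotomy ((i:ℕ)) ((i':ℕ)) with h|h|h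
    · have := hsep i i' h
      exact ⟨by omega, by omega, by omega⟩
    · exact absurd (Fin.val_injective h) hne
    · have := hsep i' i h
      exact ⟨by omega, by omega, by omega⟩
  · intro x
    refine ⟨?_, ?_, ?_⟩
    · -- constraint 1: a x + a (x+1) + a (x+2) ≤ k
      rcases hstruct (x+1) with h1 | ⟨i, hx1, hv1⟩ | ⟨i, hx1, hv1⟩
      · rcases hstruct x with h0 | ⟨p, hx0, hv0⟩ | ⟨p, hx0, hv0⟩
        · have := hal (x+2); omega
        · have hcp := hc p
          have hv1' : a (x+1) = l - c p := by
            rw [(by omega : x + 1 = j p + 1)]; exact hval2 p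
          rcases hstruct (x+2) with h2 | ⟨q, hx2, hv2⟩ | ⟨q, hx2, hv2⟩
          · omega
          · have := hR2 q p (by omega)
            have := hc q
            omega
          · exact absurd (by omega : j q = j p + 1) (hD1 q p)
        · have hcp := hc p
          rcases hstruct (x+2) with h2 | ⟨q, hx2, hv2⟩ | ⟨q, hx2, hv2⟩
          · omega
          · have := hR3 q p (by omega)
            have := hc q
            omega
          · have : a (x+1) = c q := by
              rw [(by omega : x + 1 = j q)]; exact hval1 q
            have := hc q
            omega
      · have hci := hc i
        have hv2 : a (x+2) = l - c i := by
          rw [(by omega : x + 2 = j i + 1)]; exact hval2 i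
        rcases hstruct x with h0 | ⟨p, hx0, hv0⟩ | ⟨p, hx0, hv0⟩
        · omega
        · exact absurd (by omega : j i = j p + 1) (hD1 i p)
        · have := hR2 i p (by omega)
          have := hc p
          omega
      · have hci := hc i
        have hv0 : a x = c i := by
          rw [(by omega : x = j i)]; exact hval1 i
        rcases hstruct (x+2) with h2 | ⟨q, hx2, hv2⟩ | ⟨q, hx2, hv2⟩
        · omega
        · have := hR2 q i (by omega)
          have := hc q
          omega
        · exact absurd (by omega : j q = j i + 1) (hD1 q i)
    · -- constraint 2: a x + a (x+1) ≤ l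
      rcases hstruct x with h0 | ⟨i, hx, hv⟩ | ⟨i, hx, hv⟩
      · have := hal (x+1); omega
      · have := hc i
        have h2 : a (x+1) = l - c i := by
          rw [(by omega : x + 1 = j i + 1)]; exact hval2 i
        omega
      · have := hc i
        rcases hstruct (x+1) with h1 | ⟨q, hq, hv'⟩ | ⟨q, hq, hv'⟩
        · omega
        · have := hR2 q i (by omega)
          have := hc q
          omega
        · exact absurd (by omega : j q = j i + 1) (hD1 q i)
    · -- constraint 3: a (x-1) + 2*a x + 2*a (x+1) + a (x+2) ≤ k + l
      rcases hstruct x with h0 | ⟨i, hx, hv⟩ | ⟨i, hx, hv⟩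
      · rcases hstruct (x+1) with h1 | ⟨q, hq, hv1⟩ | ⟨q, hq, hv1⟩
        · have := hal (x-1); have := hal (x+2); omega
        · have hcq := hc q
          have hv2 : a (x+2) = l - c q := by
            rw [(by omega : x + 2 = j q + 1)]; exact hval2 q
          rcases hstruct (x-1) with hm | ⟨p, hp, hvm⟩ | ⟨p, hp, hvm⟩
          · omega
          · have hcp := hc p
            have := hR2 q p (by omega)
            have hax : a x = l - c p := by
              rw [(by omega : x = j p + 1)]; exact hval2 p
            omega
          · have hcp := hc p
            have := hR3 q p (by omega)
            omega
        · have : a x = c q := by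
            rw [(by omega : x = j q)]; exact hval1 q
          have := hc q
          omega
      · -- Case A : x = j i
        have hci := hc i
        have hv1 : a (x+1) = l - c i := by
          rw [(by omega : x + 1 = j i + 1)]; exact hval2 i
        rcases hstruct (x-1) with hm | ⟨p, hp, hvm⟩ | ⟨p, hp, hvm⟩
        · rcases hstruct (x+2) with h2 | ⟨q, hq2, hv2⟩ | ⟨q, hq2, hv2⟩
          · omega
          · have := hR2 q i (by omega)
            have := hc q
            omega
          · exact absurd (by omega : j q = j i + 1) (hD1 q i)
        · exact absurd (by omega : j i = j p + 1) (hD1 i p)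
        · have hcp := hc p
          have hRp := hR2 i p (by omega)
          rcases hstruct (x+2) with h2 | ⟨q, hq2, hv2⟩ | ⟨q, hq2, hv2⟩
          · omega
          · have := hR2 q i (by omega)
            have := hc q
            omega
          · exact absurd (by omega : j q = j i + 1) (hD1 q i)
      · -- Case B : x = j i + 1
        have hci := hc i
        have hvm : a (x-1) = c i := by
          rw [(by omega : x - 1 = j i)]; exact hval1 i
        rcases hstruct (x+1) with h1 | ⟨q, hq, hv1⟩ | ⟨q, hq, hv1⟩
        · rcases hstruct (x+2) with h2 | ⟨r, hr, hv2⟩ | ⟨r, hr, hv2⟩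
          · omega
          · have := hR3 r i (by omega)
            have := hc r
            omega
          · have : a (x+1) = c r := by
              rw [(by omega : x + 1 = j r)]; exact hval1 r
            have := hc r
            omega
        · have := hR2 q i (by omega)
          have hcq := hc q
          have hv2 : a (x+2) = l - c q := by
            rw [(by omega : x + 2 = j q + 1)]; exact hval2 q
          omega
        · exact absurd (by omega : j q = j i + 1) (hD1 q i)
end
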